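/- Define QBER(p) = 1 − (1 − 2p + 10p²/9)/(1 − 4p/3 + 8p²/9) for p ∈ [0,1]. Then QBER(p) < p for every p ∈ (0, 1/2), and QBER(1/2) = 1/2. (Hence the probability threshold of the single-qubit error-detection scheme using one noisy EPR pair is p_th = 1/2.) -/
import Mathlib


/-- The qubit error ratio of the single-qubit error-detection scheme using one noisy EPR
pair over quantum depolarizing channels with depolarizing probability `p`. -/
noncomputable def QBER (p : ℝ) : ℝ :=
  1 - (1 - 2*p + 10*p^2/9) / (1 - 4*p/3 + 8*p^2/9)

/-- `QBER(p) < p` for every `p ∈ (0, 1/2)`, and `QBER(1/2) = 1/2`; hence the probability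
threshold of the single-qubit error-detection scheme using one noisy EPR pair is
`p_th = 1/2`. -/
theorem stmt3 :
    (∀ p ∈ Set.Ioo (0 : ℝ) (1/2), QBER p < p) ∧ QBER (1/2) = 1/2 := by
  constructor
  · rintro p ⟨hp0, hp1⟩
    have hD : (0:ℝ) < 1 - 4*p/3 + 8*p^2/9 := by nlinarith [sq_nonneg (p - 3/4)]
    rw [QBER, sub_lt_comm, lt_div_iff₀ hD]
    nlinarith [mul_pos hp0 (by linarith : (0:ℝ) < 1 - 2*p), sq_nonneg p]
  · norm_num [QBER]
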